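/- arXiv:2112.04551 — 3 statements merged into one kernel-verified Lean document; each statement's English description precedes it below -/
import Mathlib

section
/- For natural numbers R, t, ℓ' with t ≤ R, the sum over n' from 0 to 2R - 2t of C(n' + ℓ', n') * C(2R - ℓ' - n', 2R - 2t - n') equals C(2R + 1, 2t + 1). -/
lemma conv_choose : ∀ (b a m : ℕ),
    ∑ n ∈ Finset.range (m+1), (n+a).choose a * (m-n+b).choose b
      = (m+a+b+1).choose (a+b+1) := by
  intro b
  induction b with
  | zero =>
    intro a m
    simpa using Nat.sum_range_add_choose m a
  | succ b ih =>
    intro a m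
    induction m with
    | zero => simp
    | succ m ihm =>
      rw [Finset.sum_range_succ]
      have hsplit : ∑ n ∈ Finset.range (m+1),
          (n+a).choose a * (m+1-n+(b+1)).choose (b+1)
          = (∑ n ∈ Finset.range (m+1), (n+a).choose a * (m-n+(b+1)).choose (b+1))
            + ∑ n ∈ Finset.range (m+1), (n+a).choose a * (m+1-n+b).choose b := by
        rw [← Finset.sum_add_distrib]
        apply Finset.sum_congr rfl
        intro n hn
        have hn' : n ≤ m := Nat.lt_succ_iff.mp (Finset.mem_range.mp hn)
        have h1 : m+1-n+(b+1) = (m-n+(b+1)) + 1 := by omega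
        have h2 : m+1-n+b = m-n+(b+1) := by omega
        rw [h1, h2, Nat.choose_succ_succ, Nat.mul_add, Nat.succ_eq_add_one]
        ring
      rw [hsplit, ihm]
      have hb := ih a (m+1)
      rw [Finset.sum_range_succ] at hb
      simp only [Nat.sub_self] at hb
      have hlast : (m+1+a).choose a * (0+b).choose b = (m+1+a).choose a := by simp
      rw [hlast] at hb
      have e1 : m+1+a+b+1 = m+a+(b+1)+1 := by omega
      have e2 : a+b+1 = a+(b+1) := by omega
      rw [e1, e2] at hb
      have h3 : m+1-(m+1)+(b+1) = b+1 := by omega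
      rw [h3, Nat.choose_self, Nat.mul_one]
      have : m+(a+(b+1))+1 = (m+a+b+1)+1 := by ring
      -- goal: C(m+a+(b+1)+1, a+(b+1)+1) form
      have goal_eq : (m+1+a+(b+1)+1).choose (a+(b+1)+1)
          = (m+a+(b+1)+1).choose (a+(b+1)+1) + (m+a+(b+1)+1).choose (a+(b+1)) := by
        have : m+1+a+(b+1)+1 = (m+a+(b+1)+1)+1 := by ring
        rw [this, Nat.choose_succ_succ']
        omega
      omega
  
theorem stmt_1 (R t ℓ' : ℕ) (ht : t ≤ R) (hℓ : ℓ' ≤ 2*t) :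
    ∑ n' ∈ Finset.range (2*R - 2*t + 1),
      (n' + ℓ').choose n' * (2*R - ℓ' - n').choose (2*R - 2*t - n')
      = (2*R + 1).choose (2*t + 1) := by
  have key := conv_choose (2*t - ℓ') ℓ' (2*R - 2*t)
  have heq : ∑ n' ∈ Finset.range (2*R - 2*t + 1),
      (n' + ℓ').choose n' * (2*R - ℓ' - n').choose (2*R - 2*t - n')
      = ∑ n ∈ Finset.range (2*R - 2*t + 1),
        (n + ℓ').choose ℓ' * (2*R - 2*t - n + (2*t - ℓ')).choose (2*t - ℓ') := by
    apply Finset.sum_congr rfl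
    intro n hn
    have hn' : n ≤ 2*R - 2*t := Nat.lt_succ_iff.mp (Finset.mem_range.mp hn)
    have h1 : (n + ℓ').choose n = (n + ℓ').choose ℓ' := Nat.choose_symm_add
    have h2 : 2*R - ℓ' - n = 2*R - 2*t - n + (2*t - ℓ') := by omega
    have h3 : (2*R - 2*t - n + (2*t - ℓ')).choose (2*R - 2*t - n)
        = (2*R - 2*t - n + (2*t - ℓ')).choose (2*t - ℓ') := Nat.choose_symm_add
    rw [h1, h2, h3]
  rw [heq, key]
  congr 1 <;> omega
end

section
/- Second pmf is valid: for natural numbers m ≤ ℓ ≤ C (C the capacity), ∑_{n=ℓ}^{C} C(Cap - n + m, Cap - n) * C(n - m, n - ℓ) / C(Cap, ℓ) = (Cap + 1)/(ℓ + 1), where Cap denotes the capacity parameter; equivalently ∑_{n=ℓ}^{Cap} C(Cap - n + m, Cap - n) * C(n - m, n - ℓ) = C(Cap + 1, ℓ + 1). -/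
open Finset

lemma hs (b t : ℕ) : ∑ i ∈ range (t+1), (b+i).choose b = (b+t+1).choose (b+1) := by
  rw [← Nat.sum_Icc_choose, ← Finset.Ico_add_one_right_eq_Icc, Finset.sum_Ico_eq_sum_range]
  have : b + t + 1 - b = t + 1 := by omega
  rw [this]

lemma key (m : ℕ) : ∀ b a : ℕ,
    ∑ k ∈ range (a+1), (m+k).choose m * (b+(a-k)).choose b = (m+b+a+1).choose (m+b+1) := by
  induction m with
  | zero =>
    intro b a
    simp only [Nat.zero_add, Nat.choose_zero_right, one_mul]
    rw [← Finset.sum_range_reflect]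
    have : ∀ k ∈ range (a+1), (b+(a-(a+1-1-k))).choose b = (b+k).choose b := by
      intro k hk; simp only [mem_range] at hk; congr 2; omega
    rw [Finset.sum_congr rfl this, hs]
  | succ m ih =>
    intro b a
    have step1 : ∀ k ∈ range (a+1),
        (m+1+k).choose (m+1) * (b+(a-k)).choose b
          = ∑ j ∈ range (a+1), if j ≤ k then (m+j).choose m * (b+(a-k)).choose b else 0 := by
      intro k hk
      simp only [mem_range] at hk
      rw [← Finset.sum_filter]
      have hfil : filter (fun j => j ≤ k) (range (a+1)) = range (k+1) := by
        ext j; simp [Nat.lt_succ_iff]; omega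
      rw [hfil, ← Finset.sum_mul]
      have : m+1+k = m+k+1 := by omega
      rw [this, ← hs m k]
    rw [Finset.sum_congr rfl step1, Finset.sum_comm]
    have step2 : ∀ j ∈ range (a+1),
        (∑ k ∈ range (a+1), if j ≤ k then (m+j).choose m * (b+(a-k)).choose b else 0)
          = (m+j).choose m * ((b+1)+(a-j)).choose (b+1) := by
      intro j hj
      simp only [mem_range, Nat.lt_succ_iff] at hj
      rw [← Finset.sum_filter]
      have hfil : filter (fun k => j ≤ k) (range (a+1)) = Ico j (a+1) := by
        ext k; simp [Nat.lt_succ_iff]; omega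
      rw [hfil, Finset.sum_Ico_eq_sum_range]
      have e1 : a + 1 - j = (a-j) + 1 := by omega
      rw [e1, ← Finset.sum_range_reflect, ← Finset.mul_sum]
      congr 1
      have : ∀ i ∈ range (a-j+1), (b+(a-(j+(a-j+1-1-i)))).choose b = (b+i).choose b := by
        intro i hi; simp only [mem_range] at hi; congr 2; omega
      rw [Finset.sum_congr rfl this, hs]
      congr 1; omega
    rw [Finset.sum_congr rfl step2, ih (b+1) a]
    congr 1 <;> omega

theorem stmt_11 (Cap ℓ m : ℕ) (hm : m ≤ ℓ) (hℓ : ℓ ≤ Cap) :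
    (∑ n ∈ Finset.Icc ℓ Cap,
        (((Cap - n + m).choose (Cap - n) * (n - m).choose (n - ℓ) : ℚ)
          / (Cap.choose ℓ : ℚ))
      = ((Cap : ℚ) + 1) / ((ℓ : ℚ) + 1))
    ∧ ∑ n ∈ Finset.Icc ℓ Cap,
        (Cap - n + m).choose (Cap - n) * (n - m).choose (n - ℓ)
      = (Cap + 1).choose (ℓ + 1) := by
  have h2 : ∑ n ∈ Finset.Icc ℓ Cap,
        (Cap - n + m).choose (Cap - n) * (n - m).choose (n - ℓ)
      = (Cap + 1).choose (ℓ + 1) := by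
    rw [← Finset.Ico_add_one_right_eq_Icc, Finset.sum_Ico_eq_sum_range]
    have e1 : Cap + 1 - ℓ = (Cap - ℓ) + 1 := by omega
    rw [e1]
    set a := Cap - ℓ with ha
    set b := ℓ - m with hb
    have trans : ∀ k ∈ range (a+1),
        (Cap - (ℓ+k) + m).choose (Cap - (ℓ+k)) * ((ℓ+k) - m).choose ((ℓ+k) - ℓ)
          = (m+(a-k)).choose m * (b+k).choose b := by
      intro k hk
      simp only [mem_range] at hk
      have e2 : Cap - (ℓ+k) = a - k := by omega
      have e3 : Cap - (ℓ+k) + m = m + (a-k) := by omega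
      have e4 : (ℓ+k) - m = b + k := by omega
      have e5 : (ℓ+k) - ℓ = k := by omega
      rw [e3, e2, e4, e5]
      rw [Nat.choose_symm_of_eq_add (show m + (a-k) = (a-k) + m by omega),
          Nat.choose_symm_of_eq_add (show b + k = k + b by omega)]
    rw [Finset.sum_congr rfl trans, ← Finset.sum_range_reflect]
    have trans2 : ∀ k ∈ range (a+1),
        (m+(a-(a+1-1-k))).choose m * (b+(a+1-1-k)).choose b
          = (m+k).choose m * (b+(a-k)).choose b := by
      intro k hk; simp only [mem_range] at hk
      congr 3 <;> omega
    rw [Finset.sum_congr rfl trans2, key m b a]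
    congr 1 <;> omega
  refine ⟨?_, h2⟩
  rw [← Finset.sum_div]
  have hcast : (∑ n ∈ Finset.Icc ℓ Cap,
      (((Cap - n + m).choose (Cap - n) * (n - m).choose (n - ℓ) : ℚ)))
      = ((Cap + 1).choose (ℓ + 1) : ℚ) := by
    rw [← h2]; push_cast; ring
  rw [hcast]
  have hpos : 0 < Cap.choose ℓ := Nat.choose_pos hℓ
  have hrelQ : ((Cap:ℚ) + 1) * (Cap.choose ℓ : ℚ) = ((Cap + 1).choose (ℓ + 1) : ℚ) * ((ℓ:ℚ) + 1) := by
    exact_mod_cast Nat.add_one_mul_choose_eq Cap ℓ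
  have h1 : (Cap.choose ℓ : ℚ) ≠ 0 := by positivity
  field_simp
  linarith [hrelQ]
end

section
/- Expected value of the second estimator: if N has pmf p(n) = C(Cap - n + m, Cap - n) * C(n - m, n - ℓ) / C(Cap + 1, ℓ + 1) on n ∈ {ℓ, ..., Cap}, then E[N] = ℓ + (ℓ - m + 1)(Cap - ℓ)/(ℓ + 2). -/
open Finset

/-- Hockey stick identity in range form. -/
lemma my_hockey (r : ℕ) : ∀ d : ℕ,
    ∑ k ∈ range (d + 1), (r + k).choose r = (r + d + 1).choose (r + 1) := by
  intro d
  induction d with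
  | zero => simp
  | succ d ih =>
    rw [Finset.sum_range_succ, ih]
    have h0 : r + (d + 1) = r + d + 1 := by ring
    rw [h0, Nat.choose_succ_succ' (r + d + 1) r]
    omega

/-- Dual Vandermonde / generalized hockey stick. -/
lemma my_L1 : ∀ m : ℕ, ∀ d r : ℕ,
    ∑ k ∈ range (d + 1), (m + (d - k)).choose m * (r + k).choose r
      = (m + r + d + 1).choose (m + r + 1) := by
  intro m
  induction m with
  | zero =>
    intro d r
    simp only [Nat.choose_zero_right, one_mul, Nat.zero_add, zero_add]
    exact my_hockey r d
  | succ m ihm =>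
    intro d
    induction d with
    | zero =>
      intro r
      simp [Nat.choose_self]
    | succ d ihd =>
      intro r
      rw [Finset.sum_range_succ]
      have hsplit : ∑ k ∈ range (d + 1),
          (m + 1 + (d + 1 - k)).choose (m + 1) * (r + k).choose r
          = ∑ k ∈ range (d + 1), ((m + (d + 1 - k)).choose m * (r + k).choose r
              + (m + 1 + (d - k)).choose (m + 1) * (r + k).choose r) := by
        apply Finset.sum_congr rfl
        intro k hk
        have hk' : k ≤ d := Nat.lt_succ_iff.mp (mem_range.mp hk)
        have h1 : d + 1 - k = d - k + 1 := by omega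
        rw [h1, ← add_mul]
        congr 1
        have h2 : m + 1 + (d - k + 1) = (m + (d - k) + 1) + 1 := by ring
        have h3 : m + (d - k + 1) = m + (d - k) + 1 := by ring
        have h4 : m + 1 + (d - k) = m + (d - k) + 1 := by ring
        rw [h2, h3, h4]
        exact Nat.choose_succ_succ' (m + (d - k) + 1) m
      rw [hsplit, Finset.sum_add_distrib, ihd r]
      have hfirst : ∑ k ∈ range (d + 1), (m + (d + 1 - k)).choose m * (r + k).choose r
            + (m + 1 + (d + 1 - (d + 1))).choose (m + 1) * (r + (d + 1)).choose r
          = (m + r + (d + 1) + 1).choose (m + r + 1)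
            + ((m + 1 + (d + 1 - (d + 1))).choose (m + 1) * (r + (d + 1)).choose r
              - (m + (d + 1 - (d + 1))).choose m * (r + (d + 1)).choose r) := by
        have := ihm (d + 1) r
        rw [Finset.sum_range_succ] at this
        simp only [Nat.sub_self, Nat.add_zero, Nat.choose_self, one_mul] at this ⊢
        omega
      rw [add_right_comm, hfirst]
      simp only [Nat.sub_self, Nat.add_zero, Nat.choose_self, one_mul, Nat.sub_self,
        Nat.sub_zero]
      have h5 : m + 1 + r + (d + 1) + 1 = (m + r + (d + 1) + 1) + 1 := by ring
      have h6 : m + 1 + r + 1 = (m + r + 1) + 1 := by ring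
      rw [h5, h6, Nat.choose_succ_succ' (m + r + (d + 1) + 1) (m + r + 1)]
      have h7 : m + 1 + r + d + 1 = m + r + (d + 1) + 1 := by ring
      rw [h7]

/-- First-moment version. -/
lemma my_L2 (m r : ℕ) : ∀ d : ℕ,
    ∑ k ∈ range (d + 1), k * ((m + (d - k)).choose m * (r + k).choose r)
      = (r + 1) * (m + r + d + 1).choose (m + r + 2) := by
  have key : ∀ k : ℕ, k * (r + k).choose r = (r + 1) * (r + k).choose (r + 1) := by
    intro k
    have := Nat.choose_succ_right_eq (r + k) r
    have h : r + k - r = k := by omega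
    rw [h] at this
    rw [mul_comm, mul_comm (r + 1)]
    exact this.symm
  intro d
  have step : ∀ k ∈ range (d + 1),
      k * ((m + (d - k)).choose m * (r + k).choose r)
        = (r + 1) * ((m + (d - k)).choose m * (r + k).choose (r + 1)) := by
    intro k _
    calc k * ((m + (d - k)).choose m * (r + k).choose r)
        = (m + (d - k)).choose m * (k * (r + k).choose r) := by ring
      _ = (m + (d - k)).choose m * ((r + 1) * (r + k).choose (r + 1)) := by rw [key k]
      _ = (r + 1) * ((m + (d - k)).choose m * (r + k).choose (r + 1)) := by ring
  rw [Finset.sum_congr rfl step, ← Finset.mul_sum]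
  congr 1
  cases d with
  | zero =>
    simp [Nat.choose_eq_zero_of_lt (show r < r + 1 by omega),
      Nat.choose_eq_zero_of_lt (show m + r + 1 < m + r + 2 by omega)]
  | succ d =>
    rw [Finset.sum_range_succ']
    have h0 : (m + (d + 1 - 0)).choose m * (r + 0).choose (r + 1) = 0 := by
      simp [Nat.choose_eq_zero_of_lt (show r < r + 1 by omega)]
    rw [h0, add_zero]
    have hcong : ∑ k ∈ range (d + 1),
        (m + (d + 1 - (k + 1))).choose m * (r + (k + 1)).choose (r + 1)
        = ∑ k ∈ range (d + 1), (m + (d - k)).choose m * ((r + 1) + k).choose (r + 1) := by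
      apply Finset.sum_congr rfl
      intro k hk
      have hk' : k ≤ d := Nat.lt_succ_iff.mp (mem_range.mp hk)
      have h1 : d + 1 - (k + 1) = d - k := by omega
      have h2 : r + (k + 1) = (r + 1) + k := by ring
      rw [h1, h2]
    rw [hcong, my_L1 m d (r + 1)]
    congr 1 <;> omega

theorem stmt_12 (Cap ℓ m : ℕ) (hm : m ≤ ℓ) (hℓ : ℓ ≤ Cap) :
    ∑ n ∈ Finset.Icc ℓ Cap,
      (n : ℚ) * (((Cap - n + m).choose (Cap - n) * (n - m).choose (n - ℓ) : ℚ)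
                  / ((Cap + 1).choose (ℓ + 1) : ℚ))
      = (ℓ : ℚ) + ((ℓ : ℚ) - (m : ℚ) + 1) * ((Cap : ℚ) - (ℓ : ℚ)) / ((ℓ : ℚ) + 2) := by
  set d := Cap - ℓ with hd
  set r := ℓ - m with hr
  set D := (Cap + 1).choose (ℓ + 1) with hD
  have hA : ∑ k ∈ range (d + 1), (m + (d - k)).choose m * (r + k).choose r = D := by
    have := my_L1 m d r
    have e1 : m + r + d + 1 = Cap + 1 := by omega
    have e2 : m + r + 1 = ℓ + 1 := by omega
    rw [e1, e2] at this
    exact this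
  have hB : ∑ k ∈ range (d + 1), k * ((m + (d - k)).choose m * (r + k).choose r)
      = (r + 1) * (Cap + 1).choose (ℓ + 2) := by
    have := my_L2 m r d
    have e1 : m + r + d + 1 = Cap + 1 := by omega
    have e2 : m + r + 2 = ℓ + 2 := by omega
    rw [e1, e2] at this
    exact this
  have hC : (Cap + 1).choose (ℓ + 2) * (ℓ + 2) = D * (Cap - ℓ) := by
    have := Nat.choose_succ_right_eq (Cap + 1) (ℓ + 1)
    have e : Cap + 1 - (ℓ + 1) = Cap - ℓ := by omega
    rw [e] at this
    exact this
  have hDpos : 0 < D := Nat.choose_pos (by omega)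
  have hD0 : ((D : ℚ)) ≠ 0 := by exact_mod_cast hDpos.ne'
  have hstep : ∑ n ∈ Finset.Icc ℓ Cap,
      (n : ℚ) * (((Cap - n + m).choose (Cap - n) * (n - m).choose (n - ℓ) : ℚ)
                  / ((Cap + 1).choose (ℓ + 1) : ℚ))
      = (((∑ k ∈ range (d + 1), (ℓ + k) * ((m + (d - k)).choose m * (r + k).choose r) : ℕ)) : ℚ)
          / (D : ℚ) := by
    rw [← Finset.Ico_add_one_right_eq_Icc, Finset.sum_Ico_eq_sum_range]
    have hcard : Cap + 1 - ℓ = d + 1 := by omega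
    rw [hcard]
    push_cast [Finset.sum_div]
    apply Finset.sum_congr rfl
    intro k hk
    have hk' : k ≤ d := Nat.lt_succ_iff.mp (mem_range.mp hk)
    have e1 : Cap - (ℓ + k) = d - k := by omega
    have e2 : ℓ + k - m = r + k := by omega
    have e3 : ℓ + k - ℓ = k := by omega
    have e4 : (Cap - (ℓ + k) + m).choose (Cap - (ℓ + k)) = (m + (d - k)).choose m := by
      rw [e1, add_comm (d - k) m, Nat.choose_symm_add]
    have e5 : (ℓ + k - m).choose (ℓ + k - ℓ) = (r + k).choose r := by
      rw [e2, e3, Nat.choose_symm_add]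
    rw [e4, e5]
    push_cast
    ring
  rw [hstep]
  have hS : ∑ k ∈ range (d + 1), (ℓ + k) * ((m + (d - k)).choose m * (r + k).choose r)
      = ℓ * D + (r + 1) * (Cap + 1).choose (ℓ + 2) := by
    have : ∀ k ∈ range (d + 1),
        (ℓ + k) * ((m + (d - k)).choose m * (r + k).choose r)
          = ℓ * ((m + (d - k)).choose m * (r + k).choose r)
            + k * ((m + (d - k)).choose m * (r + k).choose r) := by
      intro k _; ring
    rw [Finset.sum_congr rfl this, Finset.sum_add_distrib, ← Finset.mul_sum, hA, hB]
  rw [hS]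
  have hC' : ((Cap + 1).choose (ℓ + 2) : ℚ) * ((ℓ : ℚ) + 2)
      = (D : ℚ) * ((Cap : ℚ) - (ℓ : ℚ)) := by
    have := hC
    have e : ((Cap - ℓ : ℕ) : ℚ) = (Cap : ℚ) - (ℓ : ℚ) := by
      rw [Nat.cast_sub hℓ]
    calc ((Cap + 1).choose (ℓ + 2) : ℚ) * ((ℓ : ℚ) + 2)
        = (((Cap + 1).choose (ℓ + 2) * (ℓ + 2) : ℕ) : ℚ) := by push_cast; ring
      _ = ((D * (Cap - ℓ) : ℕ) : ℚ) := by rw [hC]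
      _ = (D : ℚ) * ((Cap : ℚ) - (ℓ : ℚ)) := by rw [Nat.cast_mul, e]
  have hr' : ((r : ℕ) : ℚ) = (ℓ : ℚ) - (m : ℚ) := by
    rw [hr, Nat.cast_sub hm]
  have hl2 : ((ℓ : ℚ) + 2) ≠ 0 := by positivity
  push_cast [hr']
  field_simp
  ring_nf
  ring_nf at hC'
  linear_combination ((ℓ : ℚ) - (m : ℚ) + 1) * hC'
end
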